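/- The Heisenberg inversion R(ζ,v) = (ζ·(-‖ζ‖²+iv)⁻¹, -v·|−‖ζ‖²+iv|⁻²) on ℂ × ℝ minus the origin satisfies d(R(p),R(q)) = d(p,q)/(d(p,0)·d(0,q)) for all p, q ≠ 0, where d is the Korányi–Cygan metric and 0 = (0,0). -/

import Mathlib

/-- The Korányi–Cygan gauge on the first Heisenberg group `ℂ × ℝ`. -/
noncomputable def heisGauge (p : ℂ × ℝ) : ℝ :=
  (‖p.1‖ ^ 4 + p.2 ^ 2) ^ ((1 : ℝ) / 4)

/-- The Heisenberg group law `(ζ,v)*(ζ',v') = (ζ+ζ', v+v'+2Im(ζ̄'ζ))` on `ℂ × ℝ`. -/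
noncomputable def heisMul (p q : ℂ × ℝ) : ℂ × ℝ :=
  (p.1 + q.1, p.2 + q.2 + 2 * ((starRingEnd ℂ) q.1 * p.1).im)

/-- Inversion in the Heisenberg group. -/
def heisInv (p : ℂ × ℝ) : ℂ × ℝ := (-p.1, -p.2)

/-- The Korányi–Cygan metric `d(p,q) = |p⁻¹ * q|`. -/
noncomputable def heisDist (p q : ℂ × ℝ) : ℝ :=
  heisGauge (heisMul (heisInv p) q)

/-- The Heisenberg inversion `R`. -/
noncomputable def heisR (p : ℂ × ℝ) : ℂ × ℝ :=
  (p.1 * (((-‖p.1‖ ^ 2 : ℝ) : ℂ) + (p.2 : ℂ) * Complex.I)⁻¹,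
    -p.2 * (‖((-‖p.1‖ ^ 2 : ℝ) : ℂ) + (p.2 : ℂ) * Complex.I‖)⁻¹ ^ 2)

noncomputable def heisW (p : ℂ × ℝ) : ℂ :=
  ((-‖p.1‖ ^ 2 : ℝ) : ℂ) + (p.2 : ℂ) * Complex.I

noncomputable def heisA (p q : ℂ × ℝ) : ℂ :=
  -(heisW p) - (starRingEnd ℂ) (heisW q) - 2 * (starRingEnd ℂ) q.1 * p.1

lemma heisW_re (p : ℂ × ℝ) : (heisW p).re = -‖p.1‖ ^ 2 := by
  simp [heisW, ← Complex.ofReal_pow]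

lemma heisW_im (p : ℂ × ℝ) : (heisW p).im = p.2 := by
  simp [heisW, ← Complex.ofReal_pow]

lemma heisW_ne_zero (p : ℂ × ℝ) (hp : p ≠ 0) : heisW p ≠ 0 := by
  intro h
  apply hp
  have hre : (heisW p).re = 0 := by rw [h]; simp
  have him : (heisW p).im = 0 := by rw [h]; simp
  rw [heisW_re] at hre
  rw [heisW_im] at him
  have h1 : ‖p.1‖ = 0 := by nlinarith [norm_nonneg p.1]
  have : p.1 = 0 := by simpa using h1
  exact Prod.ext this him

lemma rpow_quarter (t : ℝ) (ht : 0 ≤ t) :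
    t ^ ((1 : ℝ) / 4) = Real.sqrt (Real.sqrt t) := by
  rw [Real.sqrt_eq_rpow, Real.sqrt_eq_rpow, ← Real.rpow_mul ht]
  norm_num

lemma heisA_re (p q : ℂ × ℝ) :
    (heisA p q).re = ‖q.1 - p.1‖ ^ 2 := by
  simp [heisA, heisW_re, Complex.mul_re, Complex.sq_norm, Complex.normSq_apply,
    Complex.sub_re, Complex.sub_im]
  ring

lemma heisA_im (p q : ℂ × ℝ) :
    (heisA p q).im = q.2 - p.2 - 2 * ((starRingEnd ℂ) q.1 * p.1).im := by
  simp [heisA, heisW_im, Complex.mul_im]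
  ring

lemma heisDist_eq (p q : ℂ × ℝ) :
    heisDist p q = Real.sqrt ‖heisA p q‖ := by
  have hm : heisMul (heisInv p) q =
      (q.1 - p.1, q.2 - p.2 - 2 * ((starRingEnd ℂ) q.1 * p.1).im) := by
    simp only [heisMul, heisInv, mul_neg, Complex.neg_im, Prod.mk.injEq]
    constructor <;> ring
  unfold heisDist
  rw [hm]
  show (‖q.1 - p.1‖ ^ 4 +
      (q.2 - p.2 - 2 * ((starRingEnd ℂ) q.1 * p.1).im) ^ 2) ^ ((1:ℝ)/4) = _
  rw [rpow_quarter _ (by positivity)]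
  congr 1
  conv_rhs => rw [Complex.norm_def, Complex.normSq_apply, heisA_re, heisA_im]
  rw [show ‖q.1 - p.1‖ ^ 4 = 
    (‖q.1 - p.1‖ ^ 2) * (‖q.1 - p.1‖ ^ 2) by ring]
  congr 1
  ring

lemma heisW_R (p : ℂ × ℝ) (hp : p ≠ 0) : heisW (heisR p) = (heisW p)⁻¹ := by
  have hns : Complex.normSq (heisW p) ≠ 0 := by
    simpa [Complex.normSq_eq_zero] using heisW_ne_zero p hp
  apply Complex.ext
  · rw [Complex.inv_re, heisW_re]
    show -‖(heisR p).1‖ ^ 2 = _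
    have h1 : (heisR p).1 = p.1 * (heisW p)⁻¹ := rfl
    rw [h1, norm_mul, norm_inv, mul_pow, inv_pow, Complex.sq_norm, Complex.sq_norm,
      div_eq_mul_inv]
    have : (heisW p).re = -Complex.normSq p.1 := by
      rw [heisW_re, ← Complex.sq_norm]
    rw [this]
    ring
  · rw [Complex.inv_im, heisW_im]
    show (heisR p).2 = _
    have h2 : (heisR p).2 = -p.2 * (‖heisW p‖)⁻¹ ^ 2 := rfl
    rw [h2, inv_pow, Complex.sq_norm, heisW_im, div_eq_mul_inv]

lemma heisA_R (p q : ℂ × ℝ) (hp : p ≠ 0) (hq : q ≠ 0) :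
    heisA (heisR p) (heisR q) =
      heisA p q * (heisW p)⁻¹ * ((starRingEnd ℂ) (heisW q))⁻¹ := by
  have hwp := heisW_ne_zero p hp
  have hwq := heisW_ne_zero q hq
  have hcwq : (starRingEnd ℂ) (heisW q) ≠ 0 := by simpa using hwq
  have h1 : (heisR p).1 = p.1 * (heisW p)⁻¹ := rfl
  have h2 : (heisR q).1 = q.1 * (heisW q)⁻¹ := rfl
  unfold heisA
  rw [heisW_R p hp, heisW_R q hq, h1, h2, map_mul, map_inv₀]
  field_simp
  ring

lemma heisW_zero : heisW (0 : ℂ × ℝ) = 0 := by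
  simp [heisW]

theorem stmt_7 (p q : ℂ × ℝ) (hp : p ≠ 0) (hq : q ≠ 0) :
    heisDist (heisR p) (heisR q) = heisDist p q / (heisDist p 0 * heisDist 0 q) := by
  have hd1 : heisDist p 0 = Real.sqrt ‖heisW p‖ := by
    rw [heisDist_eq]
    congr 1
    simp [heisA, heisW_zero]
  have hd2 : heisDist 0 q = Real.sqrt ‖heisW q‖ := by
    rw [heisDist_eq]
    have h : heisA 0 q = -(starRingEnd ℂ) (heisW q) := by
      simp [heisA, heisW_zero]
    rw [h]
    simp
  rw [heisDist_eq, heisDist_eq, heisA_R p q hp hq, hd1, hd2]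
  rw [norm_mul, norm_mul, norm_inv, norm_inv, Complex.norm_conj]
  rw [Real.sqrt_mul (by positivity), Real.sqrt_mul (by positivity),
    Real.sqrt_inv, Real.sqrt_inv]
  field_simp
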